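/- Invertibility of the bordered matrix in the Neumann case (the claim that the matrix Â in (5.12) is symmetric and invertible): let A be a real symmetric positive semidefinite n × n matrix whose kernel is exactly the span of a nonzero vector e ∈ ℝⁿ, and let m ∈ ℝⁿ satisfy ⟨m, e⟩ ≠ 0. Then the (n+1) × (n+1) block matrix Â = [[A, m], [mᵀ, 0]] (with m as an extra column, mᵀ as an extra row and 0 in the corner) is symmetric and invertible. -/

import Mathlib

open Matrix

/-- Invertibility of the bordered matrix in the Neumann case (the matrix `Â` in (5.12)):
if `A` is symmetric positive semidefinite with kernel exactly the span of `e ≠ 0`, and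
`⟨m, e⟩ ≠ 0`, then the bordered matrix `Â = [[A, m], [mᵀ, 0]]` is symmetric and invertible. -/
theorem bordered_matrix_symm_invertible
    (n : ℕ) (A : Matrix (Fin n) (Fin n) ℝ) (e m : Fin n → ℝ)
    (hsym : Aᵀ = A)
    (hpsd : ∀ x : Fin n → ℝ, 0 ≤ x ⬝ᵥ A.mulVec x)
    (he : e ≠ 0)
    (hker : {x : Fin n → ℝ | A.mulVec x = 0} = {x : Fin n → ℝ | ∃ t : ℝ, x = t • e})
    (hm : m ⬝ᵥ e ≠ 0) :
    (Matrix.fromBlocks A (Matrix.of fun i (_ : Fin 1) => m i)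
        (Matrix.of fun (_ : Fin 1) j => m j) (0 : Matrix (Fin 1) (Fin 1) ℝ))ᵀ =
      Matrix.fromBlocks A (Matrix.of fun i (_ : Fin 1) => m i)
        (Matrix.of fun (_ : Fin 1) j => m j) (0 : Matrix (Fin 1) (Fin 1) ℝ) ∧
    IsUnit (Matrix.fromBlocks A (Matrix.of fun i (_ : Fin 1) => m i)
        (Matrix.of fun (_ : Fin 1) j => m j) (0 : Matrix (Fin 1) (Fin 1) ℝ)) := by
  have hA : A.PosSemidef := by
    refine Matrix.posSemidef_iff_dotProduct_mulVec.mpr ⟨?_, ?_⟩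
    · rw [Matrix.IsHermitian, conjTranspose_eq_transpose_of_trivial, hsym]
    · intro x
      simpa using hpsd x
  have hmne : m ≠ 0 := by
    intro h; apply hm; rw [h]; simp
  constructor
  · rw [fromBlocks_transpose, hsym]
    congr 1 <;> ext i j <;> rfl
  · rw [Matrix.isUnit_iff_isUnit_det, isUnit_iff_ne_zero]
    intro hdet
    obtain ⟨v, hv0, hv⟩ := Matrix.exists_mulVec_eq_zero_iff.mpr hdet
    set x : Fin n → ℝ := fun i => v (Sum.inl i) with hx
    set t : ℝ := v (Sum.inr 0) with ht
    have hveq : v = Sum.elim x (fun _ => t) := by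
      funext i
      cases i with
      | inl i => rfl
      | inr i => simp [ht, Subsingleton.elim i 0]
    rw [hveq, fromBlocks_mulVec] at hv
    have h1 : A.mulVec x + t • m = 0 := by
      funext i
      have := congrFun hv (Sum.inl i)
      simpa [Matrix.mulVec, dotProduct, mul_comm] using this
    have h2 : m ⬝ᵥ x = 0 := by
      have := congrFun hv (Sum.inr 0)
      simpa [Matrix.mulVec, dotProduct] using this
    have hxAx : x ⬝ᵥ A.mulVec x = 0 := by
      have : A.mulVec x = -(t • m) := by
        rw [eq_neg_iff_add_eq_zero]; exact h1
      rw [this]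
      simp [dotProduct_smul, dotProduct_comm x m, h2]
    have hAx : A.mulVec x = 0 := by
      have := (hA.dotProduct_mulVec_zero_iff x).mp (by simpa using hxAx)
      simpa using this
    have htm : t • m = 0 := by
      have := h1; rw [hAx, zero_add] at this; exact this
    have ht0 : t = 0 := by
      rcases smul_eq_zero.mp htm with h | h
      · exact h
      · exact absurd h hmne
    have hxker : x ∈ {x : Fin n → ℝ | A.mulVec x = 0} := hAx
    rw [hker] at hxker
    obtain ⟨s, hs⟩ := hxker
    have hs0 : s = 0 := by
      have : m ⬝ᵥ x = s * (m ⬝ᵥ e) := by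
        rw [hs]; simp [dotProduct_smul, mul_comm]
      rw [h2] at this
      rcases mul_eq_zero.mp this.symm with h | h
      · exact h
      · exact absurd h hm
    have hx0 : x = 0 := by rw [hs, hs0, zero_smul]
    apply hv0
    rw [hveq, hx0, ht0]
    funext i; cases i <;> simp
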